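/- arXiv:2104.07933 — 3 statements merged into one kernel-verified Lean document; each statement's English description precedes it below -/
import Mathlib

section
/- Let 0 < q < p < 1 with p² > q. Then there exist nonzero vectors v_{21}, v_{23} ∈ ℓ²(ℕ₀) such that [(1 + p⁴/q) I − (p²/q²) α − q p² α*] v_{23} = 0 and γ* v_{21} = (1/p²)(I − (p²/q²) α) v_{23}. -/
set_option maxHeartbeats 1600000
open scoped ENNReal
open Finset

namespace SUqTwoAux
noncomputable section


open Finset in
theorem decay_lemma (ρ σ τ : ℝ) (x : ℕ → ℝ) (d : ℕ → ℝ)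
    (hτ0 : 0 < τ) (hστ : τ < σ) (hσρ : σ ≤ ρ) (hρ1 : ρ < 1)
    (hx0 : ∀ k, 0 ≤ x k) (hx1 : ∀ k, x k ≤ 1)
    (hd0 : d 0 = 1) (hd1 : d 1 = ρ + σ)
    (hrec : ∀ k, d (k+2) = (ρ+σ) * d (k+1) - ρ*σ*(1 - x k) * d k) :
    (∀ k, 0 < d k ∧ ρ * d k ≤ d (k+1)) ∧
    (∀ k, d (k+1) - τ*d k ≤
      (ρ+σ-τ) * (ρ*σ/τ)^k * ∏ j ∈ range k, (1 + (ρ/(ρ-τ)) * x j)) := by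
  have hσ0 : 0 < σ := hτ0.trans hστ
  have hρ0 : 0 < ρ := hσ0.trans_le hσρ
  have hτρ : τ < ρ := hστ.trans_le hσρ
  have hρτ' : ρ - τ ≠ 0 := by linarith
  have hτ' : τ ≠ 0 := ne_of_gt hτ0
  have hpos : ∀ k, 0 < d k ∧ ρ * d k ≤ d (k+1) := by
    intro k
    induction k with
    | zero => exact ⟨by rw [hd0]; norm_num, by rw [hd0, hd1]; nlinarith⟩
    | succ k ih =>
      have h1 : 0 < d (k+1) := lt_of_lt_of_le (by nlinarith [ih.1]) ih.2
      refine ⟨h1, ?_⟩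
      rw [hrec k]
      have h2 : ρ*σ*(1 - x k) * d k ≤ σ * d (k+1) := by
        have h3 : ρ*σ*(1 - x k) * d k ≤ ρ*σ*d k := by
          nlinarith [mul_nonneg (mul_nonneg (mul_nonneg hρ0.le hσ0.le) (hx0 k)) ih.1.le]
        have h4 : σ * (ρ * d k) ≤ σ * d (k+1) := by nlinarith [ih.2]
        nlinarith
      nlinarith
  refine ⟨hpos, ?_⟩
  have hud : ∀ k, (ρ - τ) * d (k+1) ≤ ρ * (d (k+1) - τ * d k) := by
    intro k
    have := (hpos k).2
    nlinarith [(hpos k).1]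
  have hu0 : ∀ k, 0 ≤ d (k+1) - τ * d k := by
    intro k
    have h := hud k
    nlinarith [(hpos (k+1)).1]
  -- key step inequality, cleared of denominators
  have key : ∀ k, τ*(ρ-τ)*(d (k+2) - τ*d (k+1)) ≤
      ρ*σ*((ρ-τ) + ρ * x k) * (d (k+1) - τ*d k) := by
    intro k
    have e1 : τ*(d (k+2) - τ*d (k+1)) =
        (τ*(ρ+σ-τ) - ρ*σ*(1 - x k))*d (k+1) + ρ*σ*(1 - x k)*(d (k+1) - τ*d k) := by
      linear_combination τ * hrec k
    have h1 : 0 ≤ ρ*σ*(x k)*(ρ*(d (k+1) - τ*d k) - (ρ-τ)*d (k+1)) := by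
      apply mul_nonneg (mul_nonneg (mul_nonneg hρ0.le hσ0.le) (hx0 k))
      linarith [hud k]
    have h2 : 0 ≤ ((ρ-τ)*ρ*σ*(x k))*(d (k+1) - τ*d k) := by
      apply mul_nonneg _ (hu0 k)
      apply mul_nonneg (mul_nonneg (by nlinarith) hσ0.le) (hx0 k)
    have h3 : 0 ≤ ((ρ-τ)^2*(σ-τ))*d (k+1) := by
      apply mul_nonneg (mul_nonneg (sq_nonneg _) (by linarith)) (hpos (k+1)).1.le
    nlinarith [e1]
  -- induction for the product bound
  intro k
  induction k with
  | zero => simp [hd0, hd1]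
  | succ k ih =>
    have hfac : ∀ j, (0:ℝ) ≤ 1 + (ρ/(ρ-τ)) * x j := by
      intro j
      have : 0 ≤ (ρ/(ρ-τ)) * x j := mul_nonneg (div_nonneg hρ0.le (by linarith)) (hx0 j)
      linarith
    have hprod0 : (0:ℝ) ≤ ∏ j ∈ range k, (1 + (ρ/(ρ-τ)) * x j) :=
      Finset.prod_nonneg fun j _ => hfac j
    have hlam : ρ*σ*((ρ-τ) + ρ * x k) = (τ*(ρ-τ)) * ((ρ*σ/τ) * (1 + (ρ/(ρ-τ)) * x k)) := by
      field_simp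
    have hk := key k
    rw [hlam] at hk
    have hττ : 0 < τ*(ρ-τ) := by nlinarith
    have step : d (k+2) - τ*d (k+1) ≤
        (ρ*σ/τ) * (1 + (ρ/(ρ-τ)) * x k) * (d (k+1) - τ*d k) := by
      refine (mul_le_mul_iff_right₀ hττ).mp ?_
      calc τ*(ρ-τ)*(d (k+2) - τ*d (k+1)) ≤
          τ*(ρ-τ) * ((ρ*σ/τ) * (1 + (ρ/(ρ-τ)) * x k)) * (d (k+1) - τ*d k) := hk
        _ = τ*(ρ-τ) * ((ρ*σ/τ) * (1 + (ρ/(ρ-τ)) * x k) * (d (k+1) - τ*d k)) := by ring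
    have hmono : (ρ*σ/τ) * (1 + (ρ/(ρ-τ)) * x k) * (d (k+1) - τ*d k) ≤
        (ρ*σ/τ) * (1 + (ρ/(ρ-τ)) * x k) *
          ((ρ+σ-τ) * (ρ*σ/τ)^k * ∏ j ∈ range k, (1 + (ρ/(ρ-τ)) * x j)) := by
      apply mul_le_mul_of_nonneg_left ih
      apply mul_nonneg (mul_nonneg (mul_nonneg hρ0.le hσ0.le) (by positivity)) (hfac k)
    calc d (k+1+1) - τ*d (k+1) ≤
        (ρ*σ/τ) * (1 + (ρ/(ρ-τ)) * x k) * (d (k+1) - τ*d k) := step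
      _ ≤ (ρ*σ/τ) * (1 + (ρ/(ρ-τ)) * x k) *
          ((ρ+σ-τ) * (ρ*σ/τ)^k * ∏ j ∈ range k, (1 + (ρ/(ρ-τ)) * x j)) := hmono
      _ = (ρ+σ-τ) * (ρ*σ/τ)^(k+1) * ∏ j ∈ range (k+1), (1 + (ρ/(ρ-τ)) * x j) := by
          rw [Finset.prod_range_succ, pow_succ]
          ring


noncomputable def dd (q p : ℝ) : ℕ → ℝ
  | 0 => 1
  | 1 => q*p^2 + q^2/p^2
  | (k+2) => (q*p^2 + q^2/p^2) * dd q p (k+1) - q^3*(1 - q^(2*(k+1))) * dd q p k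

noncomputable def FF (q : ℝ) : ℕ → ℝ :=
  fun k => ∏ j ∈ range k, Real.sqrt (1 - q^(2*(j+1)))

theorem geo_bound {q : ℝ} (hq0 : 0 < q) (hq1 : q < 1) :
    ∀ k, ∑ j ∈ range k, q^(2*(j+1)) ≤ q^2/(1-q^2) := by
  have hq2 : q^2 < 1 := by nlinarith
  have hq2' : (0:ℝ) < 1 - q^2 := by linarith
  intro k
  have h1 : ∑ j ∈ range k, q^(2*(j+1)) = q^2 * ∑ j ∈ range k, (q^2)^j := by
    rw [Finset.mul_sum]
    refine Finset.sum_congr rfl fun j _ => ?_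
    rw [← pow_mul]
    have : 2*(j+1) = 2 + 2*j := by ring
    rw [this, pow_add]
  rw [h1]
  have h2 : ∑ j ∈ range k, (q^2)^j ≤ 1/(1-q^2) := by
    have e : ∑ j ∈ range k, (q^2)^j = (1-(q^2)^k)/(1-q^2) := by
      rw [geom_sum_eq (ne_of_lt hq2) k, div_eq_div_iff (by linarith) (by linarith)]
      ring
    rw [e, div_le_div_iff₀ hq2' hq2']
    have : (0:ℝ) ≤ (q^2)^k := by positivity
    nlinarith
  calc q^2 * ∑ j ∈ range k, (q^2)^j ≤ q^2 * (1/(1-q^2)) := by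
        apply mul_le_mul_of_nonneg_left h2 (by positivity)
    _ = q^2/(1-q^2) := by ring

theorem FF_lb {q : ℝ} (hq0 : 0 < q) (hq1 : q < 1) :
    ∀ k, Real.exp (-(q^2/((1-q^2)*(1-q^2)))) ≤ FF q k := by
  have hq2 : q^2 < 1 := by nlinarith
  have hq2' : (0:ℝ) < 1 - q^2 := by linarith
  have hxq : ∀ j : ℕ, q^(2*(j+1)) ≤ q^2 := by
    intro j
    have : 2*(j+1) = 2 + 2*j := by ring
    rw [this, pow_add]
    nlinarith [(pow_le_one₀ hq0.le hq1.le : q^(2*j) ≤ 1), pow_nonneg hq0.le (2*j), sq_nonneg q]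
  have hx0 : ∀ j : ℕ, 0 < q^(2*(j+1)) := fun j => pow_pos hq0 _
  have hfac : ∀ j : ℕ, Real.exp (-(q^(2*(j+1))/(1-q^2))) ≤ Real.sqrt (1 - q^(2*(j+1))) := by
    intro j
    set x := q^(2*(j+1)) with hx
    have hx1 : x ≤ q^2 := hxq j
    have hx0' : 0 < x := hx0 j
    have hx2 : x < 1 := lt_of_le_of_lt hx1 hq2
    set y := x/(1-q^2) with hy
    have hy0 : 0 < y := by positivity
    have h1 : 1 + y ≤ Real.exp y := by linarith [Real.add_one_le_exp y]
    have h3 : Real.exp (-y) * (1+y) ≤ 1 := by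
      calc Real.exp (-y) * (1+y) ≤ Real.exp (-y) * Real.exp y := by
            apply mul_le_mul_of_nonneg_left h1 (Real.exp_pos _).le
        _ = 1 := by rw [← Real.exp_add]; simp
    have h2 : (1:ℝ) ≤ (1-x)*(1+y) := by
      have e : (1-x)*(1+y) - 1 = x*(q^2-x)/(1-q^2) := by
        rw [hy]; field_simp; ring
      nlinarith [div_nonneg (mul_nonneg hx0'.le (by linarith : (0:ℝ) ≤ q^2 - x)) hq2'.le]
    have h4 : Real.exp (-y) ≤ 1 - x := by nlinarith [Real.exp_pos (-y)]
    calc Real.exp (-y) ≤ 1 - x := h4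
      _ = Real.sqrt ((1-x)^2) := (Real.sqrt_sq (by linarith)).symm
      _ ≤ Real.sqrt (1-x) := Real.sqrt_le_sqrt (by nlinarith)
  intro k
  calc Real.exp (-(q^2/((1-q^2)*(1-q^2))))
      ≤ Real.exp (∑ j ∈ range k, -(q^(2*(j+1))/(1-q^2))) := by
        apply Real.exp_le_exp.mpr
        have heq : ∑ j ∈ range k, -(q^(2*(j+1))/(1-q^2))
            = -((∑ j ∈ range k, q^(2*(j+1)))/(1-q^2)) := by
          rw [Finset.sum_neg_distrib, Finset.sum_div]
        rw [heq, neg_le_neg_iff, ← div_div]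
        gcongr
        exact geo_bound hq0 hq1 k
    _ = ∏ j ∈ range k, Real.exp (-(q^(2*(j+1))/(1-q^2))) := Real.exp_sum _ _
    _ ≤ FF q k := by
        apply Finset.prod_le_prod (fun j _ => (Real.exp_pos _).le) (fun j _ => hfac j)
noncomputable def ssq (q p : ℝ) (k : ℕ) : ℝ := dd q p (k+1) - (q^2/p^2) * dd q p k

noncomputable def ccq (q p : ℝ) (k : ℕ) : ℝ := dd q p k / FF q k

noncomputable def bbq (q p : ℝ) (l : ℕ) : ℝ :=
  (ccq q p l - (p^2/q^2) * (Real.sqrt (1-q^(2*(l+1))) * ccq q p (l+1)))/(p^2*q^l)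

theorem helper1 (s A F : ℝ) (hs : s ≠ 0) (hF : F ≠ 0) :
    s * (A / (F * s)) = A / F := by field_simp

theorem helper2 (s B F : ℝ) (hs : s ≠ 0) (hF : F ≠ 0) :
    s * (B / F) = (s^2 * B) / (F * s) := by field_simp

theorem helper3 (X P R : ℝ) (hP : P ≠ 0) (hR : R ≠ 0) :
    R * (X / (P * R)) = P⁻¹ * X := by field_simp

theorem helper4 (dl dl1 F P Q R : ℝ) (hF : F ≠ 0) (hP : P ≠ 0) (hQ : Q ≠ 0) (hR : R ≠ 0) :
    (dl / F - (P/Q) * (dl1 / F)) / (P * R) = -((dl1 - (Q/P) * dl)/(Q*R*F)) := by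
  field_simp; ring

theorem helper5 (K A Q B L : ℝ) (hQ : Q ≠ 0) (hB : B ≠ 0) (hL : L ≠ 0) :
    (K * A)/(Q * B * L) = (K/(Q*L)) * (A/B) := by
  have h : Q*B*L = (Q*L)*B := by ring
  rw [h, ← div_mul_div_comm]

theorem key_lemma (q p : ℝ) (hq0 : 0 < q) (hq1 : q < 1) (hp0 : 0 < p) (hp1 : p < 1)
    (hqp2 : q < p^2) :
    ∃ (C r : ℝ) (cc bb : ℕ → ℝ), 0 ≤ C ∧ 0 < r ∧ r < 1 ∧ cc 0 = 1 ∧ bb 0 ≠ 0 ∧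
      (∀ k, |cc k| ≤ C * r^k) ∧ (∀ l, |bb l| ≤ C * r^l) ∧
      ((1+p^4/q) * cc 0 = (p^2/q^2) * (Real.sqrt (1-q^(2*1)) * cc 1)) ∧
      (∀ k, (1+p^4/q) * cc (k+1) =
        (p^2/q^2) * (Real.sqrt (1-q^(2*(k+1+1))) * cc (k+1+1))
          + q*p^2*(Real.sqrt (1-q^(2*(k+1))) * cc k)) ∧
      (∀ l, q^l * bb l =
        (p^2)⁻¹ * (cc l - (p^2/q^2) * (Real.sqrt (1-q^(2*(l+1))) * cc (l+1)))) := by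
  have hp2 : (0:ℝ) < p^2 := by positivity
  have hq2 : q^2 < 1 := by nlinarith
  have hq2' : (0:ℝ) < 1 - q^2 := by linarith
  have hxq : ∀ j : ℕ, q^(2*(j+1)) ≤ q^2 := by
    intro j
    have h : 2*(j+1) = 2 + 2*j := by ring
    rw [h, pow_add]
    nlinarith [(pow_le_one₀ hq0.le hq1.le : q^(2*j) ≤ 1), pow_nonneg hq0.le (2*j), sq_nonneg q]
  have hx0 : ∀ j : ℕ, 0 < q^(2*(j+1)) := fun j => pow_pos hq0 _
  have hx1 : ∀ j : ℕ, q^(2*(j+1)) ≤ 1 := fun j => le_trans (hxq j) (by linarith)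
  have hxlt : ∀ j : ℕ, q^(2*(j+1)) < 1 := fun j => lt_of_le_of_lt (hxq j) hq2
  -- roots
  set ρ := max (q*p^2) (q^2/p^2) with hρ
  set σ := min (q*p^2) (q^2/p^2) with hσ
  have hA : 0 < q*p^2 := by positivity
  have hB : 0 < q^2/p^2 := by positivity
  have hA1 : q*p^2 < 1 := by nlinarith
  have hB1 : q^2/p^2 < 1 := by
    rw [div_lt_one hp2]; nlinarith
  have hρ1 : ρ < 1 := max_lt hA1 hB1
  have hσ0 : 0 < σ := lt_min hA hB
  have hσρ : σ ≤ ρ := min_le_max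
  have hρ0 : 0 < ρ := lt_of_lt_of_le hσ0 hσρ
  have hsum : ρ + σ = q*p^2 + q^2/p^2 := max_add_min _ _
  have hprodm : ρ * σ = q^3 := by
    have hpq3 : (q*p^2) * (q^2/p^2) = q^3 := by field_simp
    rcases le_total (q*p^2) (q^2/p^2) with h | h
    · rw [hρ, hσ, max_eq_right h, min_eq_left h, mul_comm]; exact hpq3
    · rw [hρ, hσ, max_eq_left h, min_eq_right h]; exact hpq3
  set τ := σ*(1+ρ)/2 with hτ
  have hτ0 : 0 < τ := by rw [hτ]; nlinarith
  have hστ : τ < σ := by rw [hτ]; nlinarith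
  have hτρ : τ < ρ := lt_of_lt_of_le hστ hσρ
  have hd0 : dd q p 0 = 1 := rfl
  have hd1 : dd q p 1 = ρ + σ := by rw [hsum]; rfl
  have hrec : ∀ k, dd q p (k+2) =
      (ρ+σ) * dd q p (k+1) - ρ*σ*(1 - q^(2*(k+1))) * dd q p k := by
    intro k
    rw [hsum, hprodm]; rfl
  obtain ⟨hpos, hu⟩ := decay_lemma ρ σ τ (fun k => q^(2*(k+1))) (dd q p)
    hτ0 hστ hσρ hρ1 (fun k => (hx0 k).le) hx1 hd0 hd1 hrec
  -- geometric bound on dd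
  set lam := ρ*σ/τ with hlam
  have hlam0 : 0 < lam := by rw [hlam]; positivity
  have hlam1 : lam < 1 := by
    rw [hlam, div_lt_one hτ0, hτ]
    nlinarith
  set cb := ρ/(ρ-τ) with hcb
  have hcb0 : 0 ≤ cb := by rw [hcb]; apply div_nonneg hρ0.le; linarith
  set Eb := Real.exp (cb*(q^2/(1-q^2))) with hEb
  have hEb0 : 0 < Eb := Real.exp_pos _
  have hprodle : ∀ k, (∏ j ∈ range k, (1 + cb * q^(2*(j+1)))) ≤ Eb := by
    intro k
    calc (∏ j ∈ range k, (1 + cb * q^(2*(j+1))))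
        ≤ ∏ j ∈ range k, Real.exp (cb * q^(2*(j+1))) := by
          apply Finset.prod_le_prod
          · intro j _
            have := mul_nonneg hcb0 (hx0 j).le
            linarith
          · intro j _
            linarith [Real.add_one_le_exp (cb * q^(2*(j+1)))]
      _ = Real.exp (∑ j ∈ range k, cb * q^(2*(j+1))) := (Real.exp_sum _ _).symm
      _ ≤ Eb := by
          rw [hEb, Real.exp_le_exp, ← Finset.mul_sum]
          exact mul_le_mul_of_nonneg_left (geo_bound hq0 hq1 k) hcb0
  have hud : ∀ k, (ρ - τ) * dd q p (k+1) ≤ ρ * (dd q p (k+1) - τ * dd q p k) := by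
    intro k
    have h := (hpos k).2
    have h2 : τ*(ρ*dd q p k) ≤ τ*dd q p (k+1) := mul_le_mul_of_nonneg_left h hτ0.le
    nlinarith [h2]
  set D := max 1 ((ρ/(ρ-τ)) * ((ρ+σ-τ)*Eb) / lam) with hD
  have hD1 : (1:ℝ) ≤ D := le_max_left _ _
  have hD0 : 0 < D := lt_of_lt_of_le one_pos hD1
  have hdub : ∀ k, dd q p k ≤ D * lam^k := by
    intro k
    match k with
    | 0 => rw [hd0, pow_zero, mul_one]; exact hD1
    | (k+1) =>
      have h1 : dd q p (k+1) - τ * dd q p k ≤ (ρ+σ-τ) * Eb * lam^k := by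
        calc dd q p (k+1) - τ * dd q p k
            ≤ (ρ+σ-τ) * lam^k * ∏ j ∈ range k, (1 + cb * q^(2*(j+1))) := hu k
          _ ≤ (ρ+σ-τ) * lam^k * Eb := by
              apply mul_le_mul_of_nonneg_left (hprodle k)
              have : 0 ≤ (ρ+σ-τ) := by linarith
              positivity
          _ = (ρ+σ-τ) * Eb * lam^k := by ring
      have h2 : (ρ - τ) * dd q p (k+1) ≤ ρ * ((ρ+σ-τ) * Eb * lam^k) := by
        calc (ρ - τ) * dd q p (k+1) ≤ ρ * (dd q p (k+1) - τ * dd q p k) := hud k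
          _ ≤ ρ * ((ρ+σ-τ) * Eb * lam^k) := mul_le_mul_of_nonneg_left h1 hρ0.le
      have h3 : dd q p (k+1) ≤ (ρ/(ρ-τ)) * ((ρ+σ-τ)*Eb) * lam^k := by
        rw [div_mul_eq_mul_div, div_mul_eq_mul_div, le_div_iff₀ (by linarith : (0:ℝ) < ρ-τ)]
        nlinarith [h2]
      calc dd q p (k+1) ≤ (ρ/(ρ-τ)) * ((ρ+σ-τ)*Eb) * lam^k := h3
        _ = ((ρ/(ρ-τ)) * ((ρ+σ-τ)*Eb) / lam) * lam^(k+1) := by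
            have e2 : lam^(k+1)/lam = lam^k := by
              rw [pow_succ]; exact mul_div_cancel_right₀ _ (ne_of_gt hlam0)
            calc (ρ/(ρ-τ)) * ((ρ+σ-τ)*Eb) * lam^k
                = (ρ/(ρ-τ)) * ((ρ+σ-τ)*Eb) * (lam^(k+1)/lam) := by rw [e2]
              _ = ((ρ/(ρ-τ)) * ((ρ+σ-τ)*Eb) / lam) * lam^(k+1) := by ring
        _ ≤ D * lam^(k+1) := by
            apply mul_le_mul_of_nonneg_right (le_max_right _ _) (by positivity)
  -- the s sequence
  have hss0 : ssq q p 0 = q*p^2 := by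
    show dd q p 1 - (q^2/p^2) * dd q p 0 = q*p^2
    rw [hd1, hsum, hd0]; ring
  have hc3 : (q*p^2) * (q^2/p^2) = q^3 := by field_simp
  have hssrec : ∀ k, ssq q p (k+1) = q*p^2 * ssq q p k + (q^3*q^(2*(k+1))) * dd q p k := by
    intro k
    show dd q p (k+2) - (q^2/p^2)*dd q p (k+1)
        = q*p^2*(dd q p (k+1) - (q^2/p^2)*dd q p k) + (q^3*q^(2*(k+1)))*dd q p k
    have h := hrec k
    rw [hsum, hprodm] at h
    linear_combination h + dd q p k * hc3
  have hssnn : ∀ k, 0 ≤ ssq q p k := by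
    intro k
    induction k with
    | zero => rw [hss0]; positivity
    | succ k ih =>
      rw [hssrec k]
      have h1 : 0 ≤ q*p^2 * ssq q p k := by positivity
      have h2 : 0 ≤ (q^3*q^(2*(k+1))) * dd q p k :=
        mul_nonneg (by positivity) (hpos k).1.le
      linarith
  set m := max (q*p^2) (q^2*lam) with hm
  have hmq : m < q := by
    apply max_lt
    · calc q*p^2 < q*1 := by apply mul_lt_mul_of_pos_left (by nlinarith) hq0
        _ = q := mul_one _
    · calc q^2*lam < q^2*1 := by
            apply mul_lt_mul_of_pos_left hlam1 (by positivity)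
        _ = q^2 := mul_one _
        _ < q := by nlinarith
  have hm0 : 0 < m := lt_of_lt_of_le hA (le_max_left _ _)
  set μ := (m+q)/2 with hμ
  have hμm : m < μ := by rw [hμ]; linarith
  have hμq : μ < q := by rw [hμ]; linarith
  have hμ0 : 0 < μ := lt_trans hm0 hμm
  have hμA : q*p^2 < μ := lt_of_le_of_lt (le_max_left _ _) hμm
  have hμB : q^2*lam ≤ μ := le_of_lt (lt_of_le_of_lt (le_max_right _ _) hμm)
  set K := max (q*p^2) (q^5*D/(μ - q*p^2)) with hK
  have hK0 : 0 < K := lt_of_lt_of_le hA (le_max_left _ _)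
  have hKq5 : q^5*D ≤ K*(μ - q*p^2) := by
    have h1 : q^5*D/(μ - q*p^2) ≤ K := le_max_right _ _
    rw [div_le_iff₀ (by linarith : (0:ℝ) < μ - q*p^2)] at h1
    linarith
  have hKs : ∀ k, ssq q p k ≤ K*μ^k := by
    intro k
    induction k with
    | zero => rw [hss0, pow_zero, mul_one]; exact le_max_left _ _
    | succ k ih =>
      rw [hssrec k]
      have hq5 : q^3*q^(2*(k+1)) = q^5*(q^2)^k := by
        rw [← pow_mul, ← pow_add]
        congr 1
        ring
      have h2 : (q^3*q^(2*(k+1))) * dd q p k ≤ q^5*D*(q^2*lam)^k := by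
        rw [hq5, mul_pow]
        calc q^5*(q^2)^k * dd q p k ≤ q^5*(q^2)^k * (D*lam^k) := by
              apply mul_le_mul_of_nonneg_left (hdub k) (by positivity)
          _ = q^5*D*((q^2)^k*lam^k) := by ring
      have h3 : (q^2*lam)^k ≤ μ^k := pow_le_pow_left₀ (by positivity) hμB k
      have h4 : q*p^2 * ssq q p k ≤ q*p^2*(K*μ^k) :=
        mul_le_mul_of_nonneg_left ih (by positivity)
      have h5 : q^5*D*(q^2*lam)^k ≤ q^5*D*μ^k :=
        mul_le_mul_of_nonneg_left h3 (by positivity)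
      have h6 : q^5*D*μ^k ≤ K*(μ - q*p^2)*μ^k :=
        mul_le_mul_of_nonneg_right hKq5 (by positivity)
      have : K*μ^(k+1) = q*p^2*(K*μ^k) + K*(μ - q*p^2)*μ^k := by rw [pow_succ]; ring
      linarith
  -- FF facts
  have hFpos : ∀ k, 0 < FF q k := by
    intro k
    apply Finset.prod_pos
    intro j _
    exact Real.sqrt_pos.mpr (by linarith [hxlt j])
  have hFs : ∀ k, FF q (k+1) = FF q k * Real.sqrt (1 - q^(2*(k+1))) := by
    intro k
    exact Finset.prod_range_succ _ k
  set L := Real.exp (-(q^2/((1-q^2)*(1-q^2)))) with hL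
  have hL0 : 0 < L := Real.exp_pos _
  have hLF : ∀ k, L ≤ FF q k := FF_lb hq0 hq1
  have hF0 : FF q 0 = 1 := by simp [FF]
  have hcc0 : ccq q p 0 = 1 := by
    show dd q p 0 / FF q 0 = 1
    rw [hd0, hF0]; norm_num
  have hccpos : ∀ k, 0 < ccq q p k := fun k => div_pos (hpos k).1 (hFpos k)
  have hccb : ∀ k, |ccq q p k| ≤ (D/L) * lam^k := by
    intro k
    rw [abs_of_pos (hccpos k)]
    calc ccq q p k ≤ (D*lam^k)/L :=
          div_le_div₀ (by positivity) (hdub k) hL0 (hLF k)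
      _ = (D/L) * lam^k := by ring
  have hsne : ∀ k : ℕ, Real.sqrt (1 - q^(2*(k+1))) ≠ 0 := by
    intro k
    exact ne_of_gt (Real.sqrt_pos.mpr (by linarith [hxlt k]))
  have hscc : ∀ k, Real.sqrt (1 - q^(2*(k+1))) * ccq q p (k+1) = dd q p (k+1) / FF q k := by
    intro k
    show Real.sqrt (1 - q^(2*(k+1))) * (dd q p (k+1) / FF q (k+1)) = dd q p (k+1) / FF q k
    rw [hFs k]
    exact helper1 _ _ _ (hsne k) (hFpos k).ne'
  -- the three identities
  have hR0 : (1+p^4/q) * ccq q p 0 = (p^2/q^2) * (Real.sqrt (1-q^(2*1)) * ccq q p 1) := by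
    have h := hscc 0
    norm_num at h ⊢
    rw [hcc0, h, hF0]
    have hdd1 : dd q p 1 = q*p^2 + q^2/p^2 := rfl
    rw [hdd1]
    field_simp
    ring
  have hRk : ∀ k, (1+p^4/q) * ccq q p (k+1) =
      (p^2/q^2) * (Real.sqrt (1-q^(2*(k+1+1))) * ccq q p (k+1+1))
        + q*p^2*(Real.sqrt (1-q^(2*(k+1))) * ccq q p k) := by
    intro k
    have e3 : Real.sqrt (1-q^(2*(k+1+1))) * ccq q p (k+1+1) = dd q p (k+2) / FF q (k+1) :=
      hscc (k+1)
    have e2 : Real.sqrt (1-q^(2*(k+1))) * ccq q p k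
        = ((1 - q^(2*(k+1))) * dd q p k) / FF q (k+1) := by
      have h1 : Real.sqrt (1-q^(2*(k+1))) ^ 2 = 1 - q^(2*(k+1)) :=
        Real.sq_sqrt (by linarith [hxlt k])
      show Real.sqrt (1-q^(2*(k+1))) * (dd q p k / FF q k)
          = ((1 - q^(2*(k+1))) * dd q p k) / FF q (k+1)
      rw [helper2 (Real.sqrt (1-q^(2*(k+1)))) (dd q p k) (FF q k) (hsne k) (hFpos k).ne',
        h1, ← hFs k]
    have e4 : ccq q p (k+1) = dd q p (k+1)/FF q (k+1) := rfl
    rw [e2, e3, e4]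
    have hnum : (1+p^4/q)*dd q p (k+1)
        = (p^2/q^2)*dd q p (k+2) + q*p^2*((1-q^(2*(k+1)))*dd q p k) := by
      have h := hrec k
      rw [hsum, hprodm] at h
      have hc1 : (p^2/q^2)*(q*p^2+q^2/p^2) = 1+p^4/q := by field_simp; ring
      have hc2 : (p^2/q^2)*q^3 = q*p^2 := by field_simp
      linear_combination (-(p^2/q^2)) * h - dd q p (k+1) * hc1
        + ((1-q^(2*(k+1)))*dd q p k) * hc2
    rw [← mul_div_assoc, ← mul_div_assoc, ← mul_div_assoc, ← add_div, hnum]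
  -- bb facts
  have hbbeq : ∀ l, q^l * bbq q p l =
      (p^2)⁻¹ * (ccq q p l - (p^2/q^2) * (Real.sqrt (1-q^(2*(l+1))) * ccq q p (l+1))) := by
    intro l
    show q^l * ((ccq q p l - (p^2/q^2) * (Real.sqrt (1-q^(2*(l+1))) * ccq q p (l+1)))/(p^2*q^l))
        = _
    have hql : (q:ℝ)^l ≠ 0 := by positivity
    exact helper3 _ _ _ (ne_of_gt hp2) hql
  have hbbs : ∀ l, bbq q p l = -(ssq q p l/(q^2*q^l*FF q l)) := by
    intro l
    show (ccq q p l - (p^2/q^2) * (Real.sqrt (1-q^(2*(l+1))) * ccq q p (l+1)))/(p^2*q^l)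
        = -(ssq q p l/(q^2*q^l*FF q l))
    rw [hscc l]
    show (dd q p l / FF q l - (p^2/q^2) * (dd q p (l+1) / FF q l))/(p^2*q^l)
        = -((dd q p (l+1) - (q^2/p^2) * dd q p l)/(q^2*q^l*FF q l))
    have hql : (q:ℝ)^l ≠ 0 := by positivity
    exact helper4 _ _ _ _ _ _ (hFpos l).ne' (ne_of_gt hp2) (by positivity) hql
  have hbb0 : bbq q p 0 ≠ 0 := by
    rw [hbbs 0, hss0, hF0]
    have : q*p^2/(q^2*q^0*1) > 0 := by positivity
    intro hcon
    rw [neg_eq_zero] at hcon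
    rw [hcon] at this
    exact lt_irrefl 0 this
  have hbbb : ∀ l, |bbq q p l| ≤ (K/(q^2*L)) * (μ/q)^l := by
    intro l
    rw [hbbs l, abs_neg, abs_of_nonneg (by
      apply div_nonneg (hssnn l)
      have := hFpos l
      positivity)]
    calc ssq q p l/(q^2*q^l*FF q l) ≤ (K*μ^l)/(q^2*q^l*L) := by
          apply div_le_div₀ (by positivity) (hKs l)
          · positivity
          · exact mul_le_mul_of_nonneg_left (hLF l) (by positivity)
      _ = (K/(q^2*L)) * (μ/q)^l := by
          conv_rhs => rw [div_pow]
          exact helper5 K (μ^l) (q^2) (q^l) L (by positivity) (by positivity) hL0.ne'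
  -- final assembly
  refine ⟨max (D/L) (K/(q^2*L)), max lam (μ/q), ccq q p, bbq q p, ?_, ?_, ?_, hcc0, hbb0,
    ?_, ?_, hR0, hRk, hbbeq⟩
  · apply le_max_iff.mpr
    left
    positivity
  · exact lt_of_lt_of_le hlam0 (le_max_left _ _)
  · apply max_lt hlam1
    rw [div_lt_one hq0]
    exact hμq
  · intro k
    calc |ccq q p k| ≤ (D/L) * lam^k := hccb k
      _ ≤ max (D/L) (K/(q^2*L)) * (max lam (μ/q))^k := by
        apply mul_le_mul (le_max_left _ _)
          (pow_le_pow_left₀ hlam0.le (le_max_left _ _) k) (by positivity)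
        apply le_trans (le_of_lt (by positivity : (0:ℝ) < D/L)) (le_max_left _ _)
  · intro l
    calc |bbq q p l| ≤ (K/(q^2*L)) * (μ/q)^l := hbbb l
      _ ≤ max (D/L) (K/(q^2*L)) * (max lam (μ/q))^l := by
        apply mul_le_mul (le_max_right _ _)
          (pow_le_pow_left₀ (by positivity) (le_max_right _ _) l) (by positivity)
        apply le_trans (le_of_lt (by positivity : (0:ℝ) < D/L)) (le_max_left _ _)


abbrev H := lp (fun _ : ℕ => ℂ) 2

def E (k : ℕ) : H := lp.single 2 k (1:ℂ)

theorem E_apply (k j : ℕ) : (E k) j = if j = k then 1 else 0 := by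
  show (lp.single 2 k (1:ℂ) : H) j = _
  rw [lp.single_apply]
  simp [Pi.single_apply]

theorem coord_eq_inner (x : H) (k : ℕ) : x k = inner (𝕜 := ℂ) (E k) x := by
  show x k = inner (𝕜 := ℂ) (lp.single 2 k (1:ℂ)) x
  rw [lp.inner_single_left]
  simp [RCLike.inner_apply]

theorem star_on_basis (q : ℝ) (α : H →L[ℂ] H)
    (hα0 : α (lp.single 2 0 (1 : ℂ)) = 0)
    (hαk : ∀ k : ℕ, 1 ≤ k →
      α (lp.single 2 k (1 : ℂ)) =
        ((Real.sqrt (1 - q ^ (2 * k)) : ℝ) : ℂ) • lp.single 2 (k - 1) (1 : ℂ)) :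
    ∀ l : ℕ, (star α) (E l) = ((Real.sqrt (1 - q^(2*(l+1))) : ℝ) : ℂ) • E (l+1) := by
  intro l
  rw [ContinuousLinearMap.star_eq_adjoint]
  apply lp.ext
  funext k
  rw [show ((ContinuousLinearMap.adjoint α) (E l) : ∀ _ : ℕ, ℂ) k
      = ((ContinuousLinearMap.adjoint α) (E l)) k from rfl]
  rw [coord_eq_inner _ k, ContinuousLinearMap.adjoint_inner_right]
  have hrhs : ((((Real.sqrt (1 - q^(2*(l+1))) : ℝ) : ℂ) • E (l+1) : H) : ∀ _ : ℕ, ℂ) k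
      = ((Real.sqrt (1 - q^(2*(l+1))) : ℝ) : ℂ) * (if k = l+1 then 1 else 0) := by
    rw [show ((((Real.sqrt (1 - q^(2*(l+1))) : ℝ) : ℂ) • E (l+1) : H) : ∀ _ : ℕ, ℂ) k
        = ((Real.sqrt (1 - q^(2*(l+1))) : ℝ) : ℂ) * (E (l+1)) k from rfl, E_apply]
  rw [hrhs]
  match k with
  | 0 =>
    rw [show α (E 0) = 0 from hα0]
    simp
  | (k+1) =>
    rw [show α (E (k+1)) = ((Real.sqrt (1 - q ^ (2 * (k+1))) : ℝ) : ℂ) • E (k+1-1) from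
      hαk (k+1) (by omega)]
    rw [inner_smul_left]
    have he : (E (k+1-1) : H) = E k := rfl
    rw [he]
    rw [show (inner (𝕜 := ℂ) (E k) (E l) : ℂ) = (E l) k from (coord_eq_inner (E l) k).symm]
    rw [E_apply]
    by_cases h : k = l
    · subst h
      simp [Complex.conj_ofReal]
    · simp [h, fun hh => h (Nat.succ_injective hh)]

theorem memlp_of_geom (f : ℕ → ℝ) (C r : ℝ) (hC : 0 ≤ C) (hr0 : 0 ≤ r) (hr1 : r < 1)
    (hb : ∀ k, |f k| ≤ C * r^k) : Memℓp (fun k => (f k : ℂ)) 2 := by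
  apply memℓp_gen
  have h2 : ((2:ℝ≥0∞)).toReal = 2 := by norm_num
  rw [h2]
  have hs : Summable (fun k : ℕ => C^2 * (r^2)^k) := by
    apply Summable.mul_left
    exact summable_geometric_of_lt_one (by positivity) (by nlinarith)
  apply Summable.of_nonneg_of_le (fun k => by positivity) _ hs
  intro k
  have h3 : ‖(f k : ℂ)‖ = |f k| := by
    rw [Complex.norm_real]; rfl
  rw [h3]
  have h4 := hb k
  have h5 : (0:ℝ) ≤ |f k| := abs_nonneg _
  calc |f k| ^ (2:ℝ) = |f k|^(2:ℕ) := by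
        rw [← Real.rpow_natCast]; norm_num
    _ ≤ (C*r^k)^(2:ℕ) := by
        apply pow_le_pow_left₀ h5 h4
    _ = C^2 * (r^2)^k := by rw [← pow_mul, mul_pow]; ring

theorem hasSum_basis (c : ℕ → ℂ) (v : H) (hv : ∀ k, v k = c k) :
    HasSum (fun k => c k • E k) v := by
  have h1 : HasSum (fun k : ℕ => lp.single 2 k (v k)) v := lp.hasSum_single (by norm_num) v
  have h2 : (fun k => c k • E k) = (fun k : ℕ => (lp.single 2 k (v k) : H)) := by
    funext k
    rw [hv k]
    show c k • (lp.single 2 k (1:ℂ) : H) = _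
    rw [← lp.single_smul]
    norm_num
  rw [h2]
  exact h1

theorem apply_eq (T : H →L[ℂ] H) (c : ℕ → ℂ) (v w : H) (hv : ∀ k, v k = c k)
    (hsum : HasSum (fun k => c k • T (E k)) w) : T v = w :=
  HasSum.unique (by simpa [map_smul] using T.hasSum (hasSum_basis c v hv)) hsum

theorem hasSum_shift_down (f : ℕ → H) (A : H) (c : ℕ → ℂ)
    (hA : ∀ k, A k = c (k+1)) (hf0 : f 0 = 0)
    (hfs : ∀ n, f (n+1) = c (n+1) • E n) : HasSum f A := by
  have h1 : HasSum (fun n => f (n+1)) A := by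
    have h2 : (fun n => f (n+1)) = fun n => c (n+1) • E n := funext hfs
    rw [h2]
    exact hasSum_basis _ A hA
  have h3 := (hasSum_nat_add_iff (f := f) 1).mp h1
  simpa [hf0] using h3

theorem hasSum_shift_up (f : ℕ → H) (B : H) (g : ℕ → ℂ)
    (hB : ∀ k, B k = g k) (hg0 : g 0 = 0)
    (hfs : ∀ n, f n = g (n+1) • E (n+1)) : HasSum f B := by
  have h1 : HasSum (fun k => g k • E k) B := hasSum_basis _ B hB
  have h2 := (Function.Injective.hasSum_iff (f := fun k => g k • E k)
    Nat.succ_injective ?_).mpr h1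
  · have h3 : (fun k => g k • E k) ∘ Nat.succ = f := by
      funext n
      simp only [Function.comp_apply]
      rw [hfs n]
    rwa [h3] at h2
  · intro x hx
    have hx0 : x = 0 := by
      rcases x with _ | n
      · rfl
      · exact absurd ⟨n, rfl⟩ hx
    subst hx0
    simp [hg0]

end
end SUqTwoAux

open SUqTwoAux in
/-- For `0 < q < p < 1` with `p² > q`, the system
`[(1 + p⁴/q) I − (p²/q²) α − q p² α*] v₂₃ = 0`, `γ* v₂₁ = (1/p²)(I − (p²/q²) α) v₂₃`
has a solution by nonzero vectors `v₂₁, v₂₃ ∈ ℓ²(ℕ₀)`, where `α, γ` are the standard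
`SU_q(2)` operators on `ℓ²(ℕ₀)`. -/
theorem exists_nonzero_solution_case_p_sq_gt_q
    (q p : ℝ) (hq0 : 0 < q) (hqp : q < p) (hp1 : p < 1) (hpq : q < p ^ 2)
    (α γ : lp (fun _ : ℕ => ℂ) 2 →L[ℂ] lp (fun _ : ℕ => ℂ) 2)
    (hα0 : α (lp.single 2 0 (1 : ℂ)) = 0)
    (hαk : ∀ k : ℕ, 1 ≤ k →
      α (lp.single 2 k (1 : ℂ)) =
        ((Real.sqrt (1 - q ^ (2 * k)) : ℝ) : ℂ) • lp.single 2 (k - 1) (1 : ℂ))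
    (hγ : ∀ l : ℕ, γ (lp.single 2 l (1 : ℂ)) = ((q : ℂ) ^ l) • lp.single 2 l (1 : ℂ))
    (hsa : IsSelfAdjoint γ)
    (h1 : α * γ = (q : ℂ) • (γ * α))
    (h2 : α * star γ = (q : ℂ) • (star γ * α))
    (h3 : star γ * γ = γ * star γ)
    (h4 : star α * α + star γ * γ = 1)
    (h5 : α * star α + ((q : ℂ) ^ 2) • (star γ * γ) = 1) :
    ∃ v₂₁ v₂₃ : lp (fun _ : ℕ => ℂ) 2, v₂₁ ≠ 0 ∧ v₂₃ ≠ 0 ∧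
      (((1 + p ^ 4 / q : ℝ) : ℂ) • v₂₃ - ((p ^ 2 / q ^ 2 : ℝ) : ℂ) • α v₂₃
        - ((q * p ^ 2 : ℝ) : ℂ) • (star α) v₂₃ = 0) ∧
      (star γ) v₂₁ = (((p ^ 2)⁻¹ : ℝ) : ℂ) • (v₂₃ - ((p ^ 2 / q ^ 2 : ℝ) : ℂ) • α v₂₃) := by
  classical
  have hq1 : q < 1 := hqp.trans hp1
  have hp0 : 0 < p := hq0.trans hqp
  obtain ⟨C, r, cc, bb, hC, hr0, hr1, hcc0, hbb0, hccb, hbbb, hR0, hRk, hbbeq⟩ :=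
    key_lemma q p hq0 hq1 hp0 hp1 hpq
  have hsq01 : ∀ n : ℕ, Real.sqrt (1 - q^(2*(n+1))) ≤ 1 := by
    intro n
    apply Real.sqrt_le_one.mpr
    have : (0:ℝ) ≤ q^(2*(n+1)) := by positivity
    linarith
  -- the coefficient sequences of `α v₂₃`, `α* v₂₃`, `γ v₂₁`
  set aseq : ℕ → ℝ := fun k => Real.sqrt (1-q^(2*(k+1))) * cc (k+1) with haseq
  set gseq : ℕ → ℝ := fun k =>
    Nat.casesOn k 0 (fun n => Real.sqrt (1-q^(2*(n+1))) * cc n) with hgseq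
  set wseq : ℕ → ℝ := fun l => q^l * bb l with hwseq
  have haseqb : ∀ k, |aseq k| ≤ C * r^k := by
    intro k
    have hstep : C * r^(k+1) ≤ C * r^k := by
      rw [pow_succ]
      nlinarith [mul_nonneg (mul_nonneg hC (pow_nonneg hr0.le k))
        (by linarith : (0:ℝ) ≤ 1 - r)]
    calc |aseq k| ≤ |cc (k+1)| := by
          show |Real.sqrt (1-q^(2*(k+1))) * cc (k+1)| ≤ _
          rw [abs_mul, abs_of_nonneg (Real.sqrt_nonneg _)]
          exact mul_le_of_le_one_left (abs_nonneg _) (hsq01 k)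
      _ ≤ C * r^(k+1) := hccb (k+1)
      _ ≤ C * r^k := hstep
  have hgseqb : ∀ k, |gseq k| ≤ (C/r) * r^k := by
    intro k
    match k with
    | 0 =>
      show |(0:ℝ)| ≤ (C/r) * r^0
      simp only [abs_zero, pow_zero, mul_one]
      positivity
    | (n+1) =>
      show |Real.sqrt (1-q^(2*(n+1))) * cc n| ≤ (C/r) * r^(n+1)
      have he : (C/r) * r^(n+1) = C * r^n := by
        rw [pow_succ]
        field_simp
      rw [he, abs_mul, abs_of_nonneg (Real.sqrt_nonneg _)]
      calc Real.sqrt (1-q^(2*(n+1))) * |cc n| ≤ |cc n| :=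
            mul_le_of_le_one_left (abs_nonneg _) (hsq01 n)
        _ ≤ C * r^n := hccb n
  have hwseqb : ∀ l, |wseq l| ≤ C * r^l := by
    intro l
    show |q^l * bb l| ≤ C * r^l
    rw [abs_mul, abs_of_nonneg (by positivity : (0:ℝ) ≤ q^l)]
    calc q^l * |bb l| ≤ |bb l| :=
          mul_le_of_le_one_left (abs_nonneg _) (pow_le_one₀ hq0.le hq1.le)
      _ ≤ C * r^l := hbbb l
  -- the four lp elements
  set v23 : H := ⟨fun k => (cc k : ℂ), memlp_of_geom cc C r hC hr0.le hr1 hccb⟩ with hv23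
  set A : H := ⟨fun k => (aseq k : ℂ), memlp_of_geom aseq C r hC hr0.le hr1 haseqb⟩ with hA
  set B : H := ⟨fun k => (gseq k : ℂ),
    memlp_of_geom gseq (C/r) r (by positivity) hr0.le hr1 hgseqb⟩ with hB
  set v21 : H := ⟨fun l => (bb l : ℂ), memlp_of_geom bb C r hC hr0.le hr1 hbbb⟩ with hv21
  set G : H := ⟨fun l => (wseq l : ℂ), memlp_of_geom wseq C r hC hr0.le hr1 hwseqb⟩ with hG
  -- operator images
  have hαE : ∀ n : ℕ, α (E (n+1)) = ((Real.sqrt (1 - q^(2*(n+1))) : ℝ) : ℂ) • E n := by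
    intro n
    have h := hαk (n+1) (by omega)
    simpa [E] using h
  have hαv : α v23 = A := by
    apply apply_eq α (fun k => (cc k : ℂ)) v23 A (fun k => rfl)
    apply hasSum_shift_down (fun k => (cc k : ℂ) • α (E k)) A
      (fun k => Nat.casesOn k 0 (fun n => (aseq n : ℂ)))
      (fun k => rfl)
    · show (cc 0 : ℂ) • α (E 0) = 0
      rw [show α (E 0) = 0 from hα0, smul_zero]
    · intro n
      show (cc (n+1) : ℂ) • α (E (n+1)) = (aseq n : ℂ) • E n
      rw [hαE n, smul_smul]
      congr 1
      show ((cc (n+1) : ℂ)) * ((Real.sqrt (1-q^(2*(n+1))) : ℝ) : ℂ)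
          = ((Real.sqrt (1-q^(2*(n+1))) * cc (n+1) : ℝ) : ℂ)
      push_cast
      ring
  have hsαv : (star α) v23 = B := by
    apply apply_eq (star α) (fun k => (cc k : ℂ)) v23 B (fun k => rfl)
    apply hasSum_shift_up (fun l => (cc l : ℂ) • (star α) (E l)) B
      (fun k => (gseq k : ℂ)) (fun k => rfl)
    · show ((0:ℝ) : ℂ) = 0
      norm_num
    · intro n
      show (cc n : ℂ) • (star α) (E n) = (gseq (n+1) : ℂ) • E (n+1)
      rw [star_on_basis q α hα0 hαk n, smul_smul]
      congr 1
      show ((cc n : ℂ)) * ((Real.sqrt (1-q^(2*(n+1))) : ℝ) : ℂ)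
          = ((Real.sqrt (1-q^(2*(n+1))) * cc n : ℝ) : ℂ)
      push_cast
      ring
  have hγv : γ v21 = G := by
    apply apply_eq γ (fun l => (bb l : ℂ)) v21 G (fun l => rfl)
    have h2 : (fun l => (bb l : ℂ) • γ (E l)) = fun l => (wseq l : ℂ) • E l := by
      funext l
      rw [show γ (E l) = ((q : ℂ)^l) • E l from hγ l, smul_smul]
      congr 1
      show ((bb l : ℂ)) * (q : ℂ)^l = ((q^l * bb l : ℝ) : ℂ)
      push_cast
      ring
    rw [h2]
    exact hasSum_basis _ G (fun l => rfl)
  refine ⟨v21, v23, ?_, ?_, ?_, ?_⟩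
  · intro h
    have h0 : (bb 0 : ℂ) = 0 := by
      have hc := congrArg (fun x : H => (x : ∀ _ : ℕ, ℂ) 0) h
      have hc' : (bb 0 : ℂ) = ((0 : H) : ∀ _ : ℕ, ℂ) 0 := hc
      simpa using hc'
    exact hbb0 (by exact_mod_cast h0)
  · intro h
    have h0 : (cc 0 : ℂ) = 0 := by
      have hc := congrArg (fun x : H => (x : ∀ _ : ℕ, ℂ) 0) h
      have hc' : (cc 0 : ℂ) = ((0 : H) : ∀ _ : ℕ, ℂ) 0 := hc
      simpa using hc'
    rw [hcc0] at h0
    norm_num at h0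
  · rw [hαv, hsαv]
    have key : ∀ k, (1+p^4/q) * cc k - (p^2/q^2) * aseq k - (q*p^2) * gseq k = 0 := by
      intro k
      match k with
      | 0 =>
        have h := hR0
        show (1+p^4/q) * cc 0 - (p^2/q^2) * (Real.sqrt (1-q^(2*(0+1))) * cc 1)
            - q*p^2 * 0 = 0
        norm_num at h ⊢
        linarith [h]
      | (n+1) =>
        have h := hRk n
        show (1+p^4/q) * cc (n+1)
            - (p^2/q^2) * (Real.sqrt (1-q^(2*(n+1+1))) * cc (n+1+1))
            - q*p^2 * (Real.sqrt (1-q^(2*(n+1))) * cc n) = 0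
        linarith [h]
    apply lp.ext
    funext k
    show ((1 + p ^ 4 / q : ℝ) : ℂ) * (cc k : ℂ) - ((p ^ 2 / q ^ 2 : ℝ) : ℂ) * (aseq k : ℂ)
        - ((q * p ^ 2 : ℝ) : ℂ) * (gseq k : ℂ) = 0
    exact_mod_cast key k
  · rw [hsa.star_eq, hγv, hαv]
    apply lp.ext
    funext l
    show ((q^l * bb l : ℝ) : ℂ) = (((p ^ 2)⁻¹ : ℝ) : ℂ) * ((cc l : ℂ)
        - ((p ^ 2 / q ^ 2 : ℝ) : ℂ) * ((Real.sqrt (1-q^(2*(l+1))) * cc (l+1) : ℝ) : ℂ))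
    exact_mod_cast hbbeq l
end

section
/- Let d ∈ ℕ and let Q ∈ M_d(ℂ) be a strictly positive diagonal matrix whose diagonal takes exactly n ≥ 2 distinct values, with multiplicities d_1, …, d_n (so d_1 + ⋯ + d_n = d). Then sl_Q(d) is a complex linear subspace of M_d(ℂ) of dimension d_1² + ⋯ + d_n² − 2. -/
open Matrix

set_option synthInstance.maxHeartbeats 1000000
set_option maxHeartbeats 1600000

section Aux

variable {d : ℕ} (q : Fin d → ℝ)

/-- The commutant of `diagonal q`. -/
noncomputable def commSub (d : ℕ) (q : Fin d → ℝ) :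
    Submodule ℂ (Matrix (Fin d) (Fin d) ℂ) where
  carrier := {A | ∀ j k, q j ≠ q k → A j k = 0}
  add_mem' := by intro a b ha hb j k h; simp [ha j k h, hb j k h]
  zero_mem' := by intro j k h; simp
  smul_mem' := by intro c a ha j k h; simp [ha j k h]

lemma mem_commSub_iff (A : Matrix (Fin d) (Fin d) ℂ) :
    A ∈ commSub d q ↔ A * Matrix.diagonal (fun j => (q j : ℂ)) =
      Matrix.diagonal (fun j => (q j : ℂ)) * A := by
  constructor
  · intro h
    ext j k
    rw [Matrix.mul_diagonal, Matrix.diagonal_mul]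
    by_cases hq : q j = q k
    · rw [hq]; ring
    · rw [h j k hq]; ring
  · intro h j k hq
    have h2 := congrFun (congrFun h j) k
    rw [Matrix.mul_diagonal, Matrix.diagonal_mul] at h2
    have hne : (q j : ℂ) ≠ (q k : ℂ) := by
      exact_mod_cast fun hc => hq (Complex.ofReal_injective hc)
    have h3 : A j k * ((q k : ℂ) - q j) = 0 := by linear_combination h2
    rcases mul_eq_zero.mp h3 with h' | h'
    · exact h'
    · exact absurd (sub_eq_zero.mp h').symm hne

/-- Linear functional `A ↦ ∑ j, A j j * w j`. -/
noncomputable def diagFunc (w : Fin d → ℂ) : Matrix (Fin d) (Fin d) ℂ →ₗ[ℂ] ℂ where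
  toFun A := ∑ j, A j j * w j
  map_add' A B := by simp [add_mul, Finset.sum_add_distrib]
  map_smul' c A := by simp [Finset.mul_sum, mul_assoc]

lemma trace_mul_diagonal' (w : Fin d → ℂ) (A : Matrix (Fin d) (Fin d) ℂ) :
    (A * Matrix.diagonal w).trace = ∑ j, A j j * w j := by
  simp [Matrix.trace, Matrix.diag, Matrix.mul_diagonal]

lemma inv_diagonal' (hq : ∀ j, q j ≠ 0) :
    (Matrix.diagonal (fun j => (q j : ℂ)))⁻¹ =
      Matrix.diagonal (fun j => ((q j : ℂ))⁻¹) := by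
  apply Matrix.inv_eq_right_inv
  rw [Matrix.diagonal_mul_diagonal]
  convert Matrix.diagonal_one with j
  exact mul_inv_cancel₀ (by exact_mod_cast hq j)

lemma diagFunc_stdBasis (w : Fin d → ℂ) (j' : Fin d) (c : ℂ) :
    diagFunc w (Matrix.single j' j' c) = c * w j' := by
  show (∑ j, Matrix.single j' j' c j j * w j) = c * w j'
  rw [Finset.sum_eq_single j']
  · simp [Matrix.single]
  · intro j _ hj; simp [Matrix.single, Ne.symm hj]
  · simp

lemma finrank_commSub :
    Module.finrank ℂ (commSub d q) =
      Fintype.card {p : Fin d × Fin d // q p.1 = q p.2} := by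
  classical
  let e : commSub d q ≃ₗ[ℂ] ({p : Fin d × Fin d // q p.1 = q p.2} → ℂ) :=
    { toFun := fun A p => A.1 p.1.1 p.1.2
      map_add' := fun A B => rfl
      map_smul' := fun c A => rfl
      invFun := fun f =>
        ⟨fun j k => if h : q j = q k then f ⟨(j, k), h⟩ else 0, by
          intro j k h; exact dif_neg h⟩
      left_inv := by
        intro A
        ext j k
        by_cases h : q j = q k
        · simp [h]
        · simp [h, A.2 j k h]
      right_inv := by
        intro f
        ext p
        simp [p.2] }
  rw [e.finrank_eq, Module.finrank_pi]

end Aux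

/-- For a strictly positive diagonal matrix `Q ∈ M_d(ℂ)` whose diagonal takes exactly
`n ≥ 2` distinct values with multiplicities `d₁, …, d_n`, the set
`sl_Q(d) = {A : AQ = QA, Tr(AQ) = 0, Tr(AQ⁻¹) = 0}` is a complex linear subspace of
`M_d(ℂ)` of dimension `d₁² + ⋯ + d_n² − 2`. -/
theorem slQ_is_subspace_of_dimension
    (d : ℕ) (qd : Fin d → ℝ) (hpos : ∀ j, 0 < qd j)
    (n : ℕ) (hn : 2 ≤ n) (v : Fin n → ℝ) (hv : Function.Injective v)
    (hcover : ∀ j, ∃ i, qd j = v i) (hattain : ∀ i, ∃ j, qd j = v i)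
    (dm : Fin n → ℕ)
    (hdm : ∀ i, dm i = (Finset.univ.filter (fun j => qd j = v i)).card) :
    ∃ S : Submodule ℂ (Matrix (Fin d) (Fin d) ℂ),
      (S : Set (Matrix (Fin d) (Fin d) ℂ)) =
        {A : Matrix (Fin d) (Fin d) ℂ |
          A * Matrix.diagonal (fun j => (qd j : ℂ)) =
            Matrix.diagonal (fun j => (qd j : ℂ)) * A ∧
          (A * Matrix.diagonal (fun j => (qd j : ℂ))).trace = 0 ∧
          (A * (Matrix.diagonal (fun j => (qd j : ℂ)))⁻¹).trace = 0} ∧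
      Module.finrank ℂ S = (∑ i, (dm i) ^ 2) - 2 := by
  classical
  have hq0 : ∀ j, qd j ≠ 0 := fun j => (hpos j).ne'
  have hqc0 : ∀ j, (qd j : ℂ) ≠ 0 := fun j => Complex.ofReal_ne_zero.mpr (hq0 j)
  set f₁ : Matrix (Fin d) (Fin d) ℂ →ₗ[ℂ] ℂ := diagFunc (fun j => (qd j : ℂ)) with hf₁
  set f₂ : Matrix (Fin d) (Fin d) ℂ →ₗ[ℂ] ℂ := diagFunc (fun j => ((qd j : ℂ))⁻¹) with hf₂
  set L : Matrix (Fin d) (Fin d) ℂ →ₗ[ℂ] ℂ × ℂ := f₁.prod f₂ with hL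
  set C : Submodule ℂ (Matrix (Fin d) (Fin d) ℂ) := commSub d qd with hC
  refine ⟨C ⊓ LinearMap.ker L, ?_, ?_⟩
  · ext A
    simp only [Submodule.mem_inf, SetLike.mem_coe, LinearMap.mem_ker, Set.mem_setOf_eq,
      hL, LinearMap.prod_apply, Function.prod, Prod.mk_eq_zero, hC]
    rw [mem_commSub_iff, inv_diagonal' qd hq0, trace_mul_diagonal', trace_mul_diagonal']
    rfl
  · -- dimension count
    have hcard : Fintype.card {p : Fin d × Fin d // qd p.1 = qd p.2} = ∑ i, dm i ^ 2 := by
      rw [Fintype.card_subtype]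
      have hset : (Finset.univ.filter (fun p : Fin d × Fin d => qd p.1 = qd p.2)) =
          Finset.univ.biUnion (fun i : Fin n =>
            (Finset.univ.filter (fun j => qd j = v i)) ×ˢ
            (Finset.univ.filter (fun j => qd j = v i))) := by
        ext p
        simp only [Finset.mem_filter, Finset.mem_univ, true_and, Finset.mem_biUnion,
          Finset.mem_product]
        constructor
        · intro h
          obtain ⟨i, hi⟩ := hcover p.1
          exact ⟨i, hi, h ▸ hi⟩
        · rintro ⟨i, h1, h2⟩
          rw [h1, h2]
      rw [hset, Finset.card_biUnion]
      · refine Finset.sum_congr rfl fun i _ => ?_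
        rw [Finset.card_product, hdm i, sq]
      · intro i _ i' _ hne
        refine Finset.disjoint_left.mpr ?_
        rintro p hp hp'
        simp only [Finset.mem_product, Finset.mem_filter, Finset.mem_univ, true_and] at hp hp'
        exact hne (hv (hp.1 ▸ hp'.1))
    set L' := L.domRestrict C with hL'
    -- surjectivity of L'
    obtain ⟨i0, i1, hi01⟩ : ∃ i0 i1 : Fin n, v i0 ≠ v i1 := by
      refine ⟨⟨0, by omega⟩, ⟨1, by omega⟩, fun h => ?_⟩
      have := hv h
      simp [Fin.ext_iff] at this
    obtain ⟨j0, hj0⟩ := hattain i0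
    obtain ⟨j1, hj1⟩ := hattain i1
    have hq01 : qd j0 ≠ qd j1 := by rw [hj0, hj1]; exact hi01
    have hj01 : j0 ≠ j1 := fun h => hq01 (by rw [h])
    have hsq : (qd j0 : ℂ) ^ 2 - (qd j1 : ℂ) ^ 2 ≠ 0 := by
      intro h
      have h1 : (qd j0 : ℂ) ^ 2 = (qd j1 : ℂ) ^ 2 := by linear_combination h
      have hr : qd j0 ^ 2 = qd j1 ^ 2 := by exact_mod_cast h1
      exact hq01 ((sq_eq_sq₀ (hpos j0).le (hpos j1).le).mp hr)
    have hsurj : LinearMap.range L' = ⊤ := by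
      rw [LinearMap.range_eq_top]
      rintro ⟨a, b⟩
      obtain ⟨x, y, e1, e2⟩ : ∃ x y : ℂ,
          x * (qd j0 : ℂ) + y * (qd j1 : ℂ) = a ∧
          x * ((qd j0 : ℂ))⁻¹ + y * ((qd j1 : ℂ))⁻¹ = b := by
        refine ⟨(a * (qd j0 : ℂ) - b * (qd j0 : ℂ) * (qd j1 : ℂ) ^ 2) /
            ((qd j0 : ℂ) ^ 2 - (qd j1 : ℂ) ^ 2),
          (b * (qd j0 : ℂ) ^ 2 * (qd j1 : ℂ) - a * (qd j1 : ℂ)) /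
            ((qd j0 : ℂ) ^ 2 - (qd j1 : ℂ) ^ 2), ?_, ?_⟩ <;>
          field_simp [hqc0 j0, hqc0 j1, hsq] <;> ring
      have hmem : (x • Matrix.single j0 j0 (1:ℂ) +
          y • Matrix.single j1 j1 (1:ℂ)) ∈ C := by
        intro j k h
        simp only [Matrix.add_apply, Matrix.smul_apply, Matrix.single, smul_eq_mul,
          Matrix.of_apply]
        have h1 : ¬(j0 = j ∧ j0 = k) := by rintro ⟨rfl, rfl⟩; exact h rfl
        have h2 : ¬(j1 = j ∧ j1 = k) := by rintro ⟨rfl, rfl⟩; exact h rfl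
        simp [h1, h2]
      refine ⟨⟨_, hmem⟩, ?_⟩
      show L (x • Matrix.single j0 j0 (1:ℂ) + y • Matrix.single j1 j1 (1:ℂ))
          = (a, b)
      rw [hL]
      ext
      · simpa [LinearMap.prod_apply, hf₁, map_add, diagFunc_stdBasis] using e1
      · simpa [LinearMap.prod_apply, hf₂, map_add, diagFunc_stdBasis] using e2
    -- rank-nullity
    have hC2 : Module.finrank ℂ C = ∑ i, dm i ^ 2 := by
      rw [hC, finrank_commSub, hcard]
    have hker : LinearMap.ker L' = Submodule.comap C.subtype (C ⊓ LinearMap.ker L) := by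
      rw [hL', LinearMap.ker_domRestrict, Submodule.comap_inf, Submodule.comap_subtype_self,
        top_inf_eq]
    have e3 : ↥(LinearMap.ker L') ≃ₗ[ℂ] ↥(C ⊓ LinearMap.ker L) := by
      rw [hker]
      exact Submodule.comapSubtypeEquivOfLe inf_le_left
    have hrn := LinearMap.finrank_range_add_finrank_ker L'
    rw [hsurj, finrank_top] at hrn
    have hprod : Module.finrank ℂ (ℂ × ℂ) = 2 := by
      simp [Module.finrank_prod]
    rw [hprod, hC2] at hrn
    have h4 : Module.finrank ℂ ↥(LinearMap.ker L') =
        Module.finrank ℂ ↥(C ⊓ LinearMap.ker L) := e3.finrank_eq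
    omega
end

section
/- Let d ∈ ℕ and let Q ∈ M_d(ℂ) be a strictly positive diagonal matrix whose diagonal takes exactly two distinct values q_1 ≠ q_2, and let J_1 = {j : Q_{jj} = q_1} and J_2 = {j : Q_{jj} = q_2}. Then a matrix A ∈ M_d(ℂ) belongs to sl_Q(d) if and only if A_{jk} = 0 whenever j and k lie in different sets J_1, J_2, and Σ_{j ∈ J_1} A_{jj} = 0 and Σ_{j ∈ J_2} A_{jj} = 0 (i.e., sl_Q(d) = sl(d_1) ⊕ sl(d_2), the block-diagonal matrices with both diagonal blocks of trace zero). -/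
/-- For a strictly positive diagonal matrix `Q ∈ M_d(ℂ)` whose diagonal takes exactly two
distinct values `q₁ ≠ q₂`, a matrix `A` lies in `sl_Q(d)` iff `A` vanishes on the
off-diagonal blocks and both diagonal blocks have trace zero. -/
theorem mem_slQ_iff_two_blocks
    (d : ℕ) (qd : Fin d → ℝ) (hpos : ∀ j, 0 < qd j)
    (q₁ q₂ : ℝ) (hne : q₁ ≠ q₂)
    (hcover : ∀ j, qd j = q₁ ∨ qd j = q₂)
    (h₁ : ∃ j, qd j = q₁) (h₂ : ∃ j, qd j = q₂)
    (A : Matrix (Fin d) (Fin d) ℂ) :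
    (A * Matrix.diagonal (fun j => (qd j : ℂ)) =
        Matrix.diagonal (fun j => (qd j : ℂ)) * A ∧
      (A * Matrix.diagonal (fun j => (qd j : ℂ))).trace = 0 ∧
      (A * (Matrix.diagonal (fun j => (qd j : ℂ)))⁻¹).trace = 0)
    ↔
    ((∀ j k, qd j ≠ qd k → A j k = 0) ∧
      ∑ j ∈ Finset.univ.filter (fun j => qd j = q₁), A j j = 0 ∧
      ∑ j ∈ Finset.univ.filter (fun j => qd j = q₂), A j j = 0) := by
  have hq1 : 0 < q₁ := by obtain ⟨j, hj⟩ := h₁; rw [← hj]; exact hpos j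
  have hq2 : 0 < q₂ := by obtain ⟨j, hj⟩ := h₂; rw [← hj]; exact hpos j
  have hinv : (Matrix.diagonal (fun j => (qd j : ℂ)))⁻¹
      = Matrix.diagonal fun j => ((qd j : ℂ))⁻¹ := by
    apply Matrix.inv_eq_right_inv
    rw [Matrix.diagonal_mul_diagonal]
    convert Matrix.diagonal_one with j
    exact mul_inv_cancel₀ (by exact_mod_cast (hpos j).ne')
  have htr1 : (A * Matrix.diagonal (fun j => (qd j : ℂ))).trace
      = ∑ j, A j j * (qd j : ℂ) := by
    simp [Matrix.trace, Matrix.diag, Matrix.mul_diagonal]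
  have htr2 : (A * (Matrix.diagonal (fun j => (qd j : ℂ)))⁻¹).trace
      = ∑ j, A j j * ((qd j : ℂ))⁻¹ := by
    rw [hinv]
    simp [Matrix.trace, Matrix.diag, Matrix.mul_diagonal]
  have hsplit : ∀ f : Fin d → ℂ, ∑ j, f j =
      (∑ j ∈ Finset.univ.filter (fun j => qd j = q₁), f j)
      + ∑ j ∈ Finset.univ.filter (fun j => qd j = q₂), f j := by
    intro f
    rw [← Finset.sum_filter_add_sum_filter_not Finset.univ (fun j => qd j = q₁) f]
    congr 1
    apply Finset.sum_congr _ (fun _ _ => rfl)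
    apply Finset.filter_congr
    intro j _
    rcases hcover j with h | h <;> simp [h, hne, Ne.symm hne]
  have hcast : (q₁ : ℂ) ≠ (q₂ : ℂ) := by exact_mod_cast hne
  have hc1 : (q₁ : ℂ) ≠ 0 := by exact_mod_cast hq1.ne'
  have hc2 : (q₂ : ℂ) ≠ 0 := by exact_mod_cast hq2.ne'
  constructor
  · rintro ⟨hcomm, ht1, ht2⟩
    have hblock : ∀ j k, qd j ≠ qd k → A j k = 0 := by
      intro j k hjk
      have h := congrFun (congrFun hcomm j) k
      simp only [Matrix.mul_diagonal, Matrix.diagonal_mul] at h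
      have hvjk : (qd k : ℂ) - (qd j : ℂ) ≠ 0 := by
        rw [sub_ne_zero]
        exact_mod_cast Ne.symm hjk
      have h0 : A j k * ((qd k : ℂ) - (qd j : ℂ)) = 0 := by linear_combination h
      exact (mul_eq_zero.mp h0).resolve_right hvjk
    refine ⟨hblock, ?_⟩
    set S₁ := ∑ j ∈ Finset.univ.filter (fun j => qd j = q₁), A j j with hS₁
    set S₂ := ∑ j ∈ Finset.univ.filter (fun j => qd j = q₂), A j j with hS₂
    have e1 : (q₁ : ℂ) * S₁ + (q₂ : ℂ) * S₂ = 0 := by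
      rw [htr1, hsplit (fun j => A j j * (qd j : ℂ))] at ht1
      rw [← ht1, hS₁, hS₂, Finset.mul_sum, Finset.mul_sum]
      congr 1 <;> apply Finset.sum_congr rfl <;> intro j hj <;>
        simp only [Finset.mem_filter] at hj <;> rw [hj.2] <;> ring
    have e2 : (q₁ : ℂ)⁻¹ * S₁ + (q₂ : ℂ)⁻¹ * S₂ = 0 := by
      rw [htr2, hsplit (fun j => A j j * ((qd j : ℂ))⁻¹)] at ht2
      rw [← ht2, hS₁, hS₂, Finset.mul_sum, Finset.mul_sum]
      congr 1 <;> apply Finset.sum_congr rfl <;> intro j hj <;>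
        simp only [Finset.mem_filter] at hj <;> rw [hj.2] <;> ring
    have e2' : (q₂ : ℂ) * S₁ + (q₁ : ℂ) * S₂ = 0 := by
      have := e2
      field_simp at this
      linear_combination this
    have hSS : S₁ = S₂ := by
      have h0 : ((q₁ : ℂ) - q₂) * (S₁ - S₂) = 0 := by linear_combination e1 - e2'
      have := (mul_eq_zero.mp h0).resolve_left (sub_ne_zero.mpr hcast)
      exact sub_eq_zero.mp this
    have hsum : ((q₁ : ℂ) + q₂) ≠ 0 := by
      have : (0:ℝ) < q₁ + q₂ := by linarith
      exact_mod_cast this.ne'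
    have hS1 : S₁ = 0 := by
      have h0 : ((q₁ : ℂ) + q₂) * S₁ = 0 := by
        rw [hSS] at e1 ⊢
        linear_combination e1
      exact (mul_eq_zero.mp h0).resolve_left hsum
    exact ⟨hS1, hSS ▸ hS1⟩
  · rintro ⟨hblock, hS1, hS2⟩
    refine ⟨?_, ?_, ?_⟩
    · ext j k
      simp only [Matrix.mul_diagonal, Matrix.diagonal_mul]
      by_cases h : qd j = qd k
      · rw [h]; ring
      · rw [hblock j k h]; ring
    · rw [htr1, hsplit (fun j => A j j * (qd j : ℂ))]
      have t1 : ∑ j ∈ Finset.univ.filter (fun j => qd j = q₁), A j j * (qd j : ℂ) = 0 := by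
        calc ∑ j ∈ Finset.univ.filter (fun j => qd j = q₁), A j j * (qd j : ℂ)
            = ∑ j ∈ Finset.univ.filter (fun j => qd j = q₁), A j j * (q₁ : ℂ) := by
              apply Finset.sum_congr rfl; intro j hj
              simp only [Finset.mem_filter] at hj; rw [hj.2]
          _ = (∑ j ∈ Finset.univ.filter (fun j => qd j = q₁), A j j) * (q₁ : ℂ) := by
              rw [Finset.sum_mul]
          _ = 0 := by rw [hS1, zero_mul]
      have t2 : ∑ j ∈ Finset.univ.filter (fun j => qd j = q₂), A j j * (qd j : ℂ) = 0 := by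
        calc ∑ j ∈ Finset.univ.filter (fun j => qd j = q₂), A j j * (qd j : ℂ)
            = ∑ j ∈ Finset.univ.filter (fun j => qd j = q₂), A j j * (q₂ : ℂ) := by
              apply Finset.sum_congr rfl; intro j hj
              simp only [Finset.mem_filter] at hj; rw [hj.2]
          _ = (∑ j ∈ Finset.univ.filter (fun j => qd j = q₂), A j j) * (q₂ : ℂ) := by
              rw [Finset.sum_mul]
          _ = 0 := by rw [hS2, zero_mul]
      rw [t1, t2, add_zero]
    · rw [htr2, hsplit (fun j => A j j * ((qd j : ℂ))⁻¹)]
      have t1 : ∑ j ∈ Finset.univ.filter (fun j => qd j = q₁), A j j * ((qd j : ℂ))⁻¹ = 0 := by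
        calc ∑ j ∈ Finset.univ.filter (fun j => qd j = q₁), A j j * ((qd j : ℂ))⁻¹
            = ∑ j ∈ Finset.univ.filter (fun j => qd j = q₁), A j j * ((q₁ : ℂ))⁻¹ := by
              apply Finset.sum_congr rfl; intro j hj
              simp only [Finset.mem_filter] at hj; rw [hj.2]
          _ = (∑ j ∈ Finset.univ.filter (fun j => qd j = q₁), A j j) * ((q₁ : ℂ))⁻¹ := by
              rw [Finset.sum_mul]
          _ = 0 := by rw [hS1, zero_mul]
      have t2 : ∑ j ∈ Finset.univ.filter (fun j => qd j = q₂), A j j * ((qd j : ℂ))⁻¹ = 0 := by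
        calc ∑ j ∈ Finset.univ.filter (fun j => qd j = q₂), A j j * ((qd j : ℂ))⁻¹
            = ∑ j ∈ Finset.univ.filter (fun j => qd j = q₂), A j j * ((q₂ : ℂ))⁻¹ := by
              apply Finset.sum_congr rfl; intro j hj
              simp only [Finset.mem_filter] at hj; rw [hj.2]
          _ = (∑ j ∈ Finset.univ.filter (fun j => qd j = q₂), A j j) * ((q₂ : ℂ))⁻¹ := by
              rw [Finset.sum_mul]
          _ = 0 := by rw [hS2, zero_mul]
      rw [t1, t2, add_zero]
end
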